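/- arXiv:1008.4523 — 3 statements merged into one kernel-verified Lean document; each statement's English description precedes it below -/
import Mathlib

section
/- Let K have characteristic zero, let L be a Lie algebra over K with a totally ordered basis (X, ≤). Then the elements x₁ ⋯ xₙ in the universal enveloping algebra U(L), where n ≥ 1, xᵢ ∈ X and x₁ ≤ x₂ ≤ ⋯ ≤ xₙ, together with 1, form a K-basis of U(L). -/
open UniversalEnvelopingAlgebra

attribute [local instance 100] LieRing.ofAssociativeRing

open UniversalEnvelopingAlgebra
namespace PBWaux
variable {K L X : Type*} [Field K] [LieRing L] [LieAlgebra K L] [LinearOrder X]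
abbrev M (X : Type*) [LinearOrder X] := {l : List X // l.Pairwise (· ≤ ·)}

lemma sorted_cons_of_le {x y : X} {t : List X} (hxy : x ≤ y)
    (h : (y :: t).Pairwise (· ≤ ·)) : (x :: y :: t).Pairwise (· ≤ ·) := by
  rw [List.pairwise_cons]
  refine ⟨?_, h⟩
  intro c hc
  rcases List.mem_cons.1 hc with rfl | hc
  · exact hxy
  · exact hxy.trans ((List.pairwise_cons.1 h).1 c hc)

variable (b : Module.Basis X K L)

noncomputable def A : ℕ → X → M X → (M X →₀ K)
  | 0, _, _ => 0
  | (_+1), x, ⟨[], _⟩ => Finsupp.single ⟨[x], List.pairwise_singleton _ x⟩ 1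
  | (n+1), x, ⟨y :: t, ht⟩ =>
      if hxy : x ≤ y then Finsupp.single ⟨x :: y :: t, sorted_cons_of_le hxy ht⟩ 1
      else
        (A n x ⟨t, ht.of_cons⟩).sum (fun m' c => c • A n y m') +
        (b.repr ⁅b x, b y⁆).sum (fun w c => c • A n w ⟨t, ht.of_cons⟩)

@[simp] lemma A_zero (x : X) (m : M X) : A b 0 x m = 0 := rfl

@[simp] lemma A_nil (n : ℕ) (x : X) (h) :
    A b (n+1) x ⟨[], h⟩ = Finsupp.single ⟨[x], List.pairwise_singleton _ x⟩ 1 := rfl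

lemma A_cons_le (n : ℕ) (x y : X) (t : List X) (ht) (hxy : x ≤ y) :
    A b (n+1) x ⟨y :: t, ht⟩ =
      Finsupp.single ⟨x :: y :: t, sorted_cons_of_le hxy ht⟩ 1 := by
  simp [A, hxy]

lemma A_cons_gt (n : ℕ) (x y : X) (t : List X) (ht) (hxy : ¬ x ≤ y) :
    A b (n+1) x ⟨y :: t, ht⟩ =
      (A b n x ⟨t, ht.of_cons⟩).sum (fun m' c => c • A b n y m') +
      (b.repr ⁅b x, b y⁆).sum (fun w c => c • A b n w ⟨t, ht.of_cons⟩) := by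
  simp [A, hxy]

/-- Support length bound. -/
lemma A_supp (n : ℕ) : ∀ (x : X) (m : M X), ∀ m' ∈ (A b n x m).support,
    m'.val.length ≤ m.val.length + 1 := by
  induction n with
  | zero => intro x m m' hm'; simp at hm'
  | succ n ih =>
    rintro x ⟨l, hl⟩ m' hm'
    match l, hl with
    | [], hl =>
      rw [A_nil] at hm'
      have := Finsupp.support_single_subset hm'
      simp only [Finset.mem_singleton] at this
      subst this; simp
    | y :: t, hl =>
      by_cases hxy : x ≤ y
      · rw [A_cons_le b n x y t hl hxy] at hm'
        have := Finsupp.support_single_subset hm'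
        simp only [Finset.mem_singleton] at this
        subst this; simp
      · rw [A_cons_gt b n x y t hl hxy] at hm'
        rcases Finset.mem_union.1 (Finsupp.support_add hm') with h | h
        · obtain ⟨m'', hm'', h⟩ := Finset.mem_biUnion.1 (Finsupp.support_sum h)
          have h1 : m' ∈ (A b n y m'').support := Finsupp.support_smul h
          have h2 := ih y m'' m' h1
          have h3 := ih x ⟨t, hl.of_cons⟩ m'' hm''
          simp only [List.length_cons] at *
          omega
        · obtain ⟨w, _, h⟩ := Finset.mem_biUnion.1 (Finsupp.support_sum h)
          have h1 := ih w ⟨t, hl.of_cons⟩ m' (Finsupp.support_smul h)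
          simp only [List.length_cons] at *
          omega


/-- inserting a lower bound -/
lemma orderedInsert_of_forall_le {x : X} {l : List X} (hx : ∀ a ∈ l, x ≤ a) :
    List.orderedInsert (· ≤ ·) x l = x :: l := by
  cases l with
  | nil => rfl
  | cons a t => exact List.orderedInsert_cons_of_le _ t (hx a (List.mem_cons_self))

/-- base case: acting by an element below everything in the monomial. -/
lemma A_base (n : ℕ) (x : X) (m : M X) (hx : ∀ a ∈ m.val, x ≤ a) :
    A b (n+1) x m = Finsupp.single ⟨x :: m.val, List.pairwise_cons.2 ⟨hx, m.2⟩⟩ 1 := by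
  obtain ⟨l, hl⟩ := m
  match l, hl with
  | [], hl => rfl
  | y :: t, hl => exact A_cons_le b n x y t hl (hx y (List.mem_cons_self))

/-- the unique top-length monomial in `A n x m` is `orderedInsert x m`. -/
lemma A_top (n : ℕ) : ∀ (x : X) (m : M X), ∀ m' ∈ (A b n x m).support,
    m'.val.length = m.val.length + 1 → m'.val = List.orderedInsert (· ≤ ·) x m.val := by
  induction n with
  | zero => intro x m m' hm'; simp at hm'
  | succ n ih =>
    rintro x ⟨l, hl⟩ m' hm' hlen
    match l, hl with
    | [], hl =>
      rw [A_nil] at hm'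
      have := Finsupp.support_single_subset hm'
      simp only [Finset.mem_singleton] at this
      subst this; rfl
    | y :: t, hl =>
      by_cases hxy : x ≤ y
      · rw [A_cons_le b n x y t hl hxy] at hm'
        have := Finsupp.support_single_subset hm'
        simp only [Finset.mem_singleton] at this
        subst this
        exact (List.orderedInsert_cons_of_le _ t hxy).symm
      · rw [A_cons_gt b n x y t hl hxy] at hm'
        rcases Finset.mem_union.1 (Finsupp.support_add hm') with h | h
        · obtain ⟨m'', hm'', h⟩ := Finset.mem_biUnion.1 (Finsupp.support_sum h)
          have h1 : m' ∈ (A b n y m'').support := Finsupp.support_smul h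
          have h2 := A_supp b n y m'' m' h1
          have h3 := A_supp b n x ⟨t, hl.of_cons⟩ m'' hm''
          simp only [List.length_cons] at hlen h2 h3
          have hm''len : m''.val.length = t.length + 1 := by omega
          have e1 : m''.val = List.orderedInsert (· ≤ ·) x t :=
            ih x ⟨t, hl.of_cons⟩ m'' hm'' hm''len
          have e2 : m'.val = List.orderedInsert (· ≤ ·) y m''.val := by
            apply ih y m'' m' h1; omega
          have hy : ∀ a ∈ m''.val, y ≤ a := by
            intro a ha
            rw [e1] at ha
            rcases (List.mem_orderedInsert _).1 ha with rfl | ha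
            · exact le_of_not_ge hxy
            · exact (List.pairwise_cons.1 hl).1 a ha
          rw [e2, orderedInsert_of_forall_le hy, e1]
          have : List.orderedInsert (· ≤ ·) x (y :: t)
              = y :: List.orderedInsert (· ≤ ·) x t := by
            simp [List.orderedInsert, hxy]
          rw [this]
        · obtain ⟨w, _, h⟩ := Finset.mem_biUnion.1 (Finsupp.support_sum h)
          have h1 := A_supp b n w ⟨t, hl.of_cons⟩ m' (Finsupp.support_smul h)
          simp only [List.length_cons] at hlen h1
          omega

/-- one-step stabilization. -/
lemma A_succ_eq : ∀ (k : ℕ) (m : M X), m.val.length ≤ k → ∀ (x : X) (n : ℕ),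
    m.val.length + 1 ≤ n → A b (n+1) x m = A b n x m := by
  intro k
  induction k with
  | zero =>
    rintro ⟨l, hl⟩ hlen x n hn
    match l, hl with
    | [], hl =>
      obtain ⟨n', rfl⟩ : ∃ n', n = n' + 1 := ⟨n - 1, by omega⟩
      rw [A_nil, A_nil]
    | y :: t, hl => simp at hlen
  | succ k ih =>
    rintro ⟨l, hl⟩ hlen x n hn
    match l, hl with
    | [], hl =>
      obtain ⟨n', rfl⟩ : ∃ n', n = n' + 1 := ⟨n - 1, by omega⟩
      rw [A_nil, A_nil]
    | y :: t, hl =>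
      obtain ⟨n', rfl⟩ : ∃ n', n = n' + 1 := ⟨n - 1, by omega⟩
      by_cases hxy : x ≤ y
      · rw [A_cons_le b _ x y t hl hxy, A_cons_le b _ x y t hl hxy]
      · rw [A_cons_gt b _ x y t hl hxy, A_cons_gt b _ x y t hl hxy]
        simp only [List.length_cons] at hlen hn
        have htk : t.length ≤ k := by omega
        have e0 : A b (n'+1) x ⟨t, hl.of_cons⟩ = A b n' x ⟨t, hl.of_cons⟩ :=
          ih ⟨t, hl.of_cons⟩ htk x n' (by show t.length + 1 ≤ n'; omega)
        congr 1
        · rw [e0]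
          apply Finsupp.sum_congr
          intro m' hm'
          congr 1
          by_cases hm'len : m'.val.length ≤ t.length
          · exact ih m' (by omega) y n' (by omega)
          · have h2 := A_supp b n' x ⟨t, hl.of_cons⟩ m' hm'
            have hm'len' : m'.val.length = t.length + 1 := by
              simp only at h2; omega
            have e1 : m'.val = List.orderedInsert (· ≤ ·) x t :=
              A_top b n' x ⟨t, hl.of_cons⟩ m' hm' hm'len'
            have hy : ∀ a ∈ m'.val, y ≤ a := by
              intro a ha
              rw [e1] at ha
              rcases (List.mem_orderedInsert _).1 ha with rfl | ha
              · exact le_of_not_ge hxy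
              · exact (List.pairwise_cons.1 hl).1 a ha
            obtain ⟨n'', rfl⟩ : ∃ n'', n' = n'' + 1 := ⟨n' - 1, by omega⟩
            rw [A_base b _ y m' hy, A_base b _ y m' hy]
        · apply Finsupp.sum_congr
          intro w _
          congr 1
          exact ih ⟨t, hl.of_cons⟩ htk w n' (by show t.length + 1 ≤ n'; omega)

/-- stable value of the action. -/
noncomputable def Ax (x : X) (m : M X) : M X →₀ K := A b (m.val.length + 1) x m

lemma A_stab (x : X) (m : M X) (n : ℕ) (hn : m.val.length + 1 ≤ n) :
    A b n x m = Ax b x m := by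
  induction n with
  | zero => omega
  | succ n ih =>
    rcases Nat.lt_or_ge n (m.val.length + 1) with h | h
    · have : n + 1 = m.val.length + 1 := by omega
      rw [this]; rfl
    · rw [A_succ_eq b m.val.length m le_rfl x n h, ih h]


/-- The action of the basis element `x` as a linear operator. -/
noncomputable def op (x : X) : (M X →₀ K) →ₗ[K] (M X →₀ K) :=
  Finsupp.linearCombination K (Ax b x)

lemma op_single (x : X) (m : M X) : op b x (Finsupp.single m 1) = Ax b x m := by
  simp [op, Finsupp.linearCombination_single]

lemma op_apply (x : X) (f : M X →₀ K) : op b x f = f.sum fun m c => c • Ax b x m :=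
  Finsupp.linearCombination_apply K f

/-- The candidate representation of `L` on the free module over sorted monomials. -/
noncomputable def rho : L →ₗ[K] Module.End K (M X →₀ K) :=
  Module.Basis.constr b K (fun x => op b x)

@[simp] lemma rho_basis (x : X) : rho b (b x) = op b x := Module.Basis.constr_basis b K _ x

lemma rho_apply_single (u : L) (m : M X) :
    rho b u (Finsupp.single m 1) = (b.repr u).sum fun w c => c • Ax b w m := by
  rw [rho, Module.Basis.constr_apply, Finsupp.sum, Finsupp.sum, LinearMap.coe_sum]
  simp only [Finset.sum_apply, LinearMap.smul_apply, op_single]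

lemma base_single (x : X) (m : M X) (hx : ∀ a ∈ m.val, x ≤ a) :
    op b x (Finsupp.single m 1) =
      Finsupp.single ⟨x :: m.val, List.pairwise_cons.2 ⟨hx, m.2⟩⟩ 1 := by
  rw [op_single, Ax, A_base b _ x m hx]

/-- The key unfolding identity for the action in the non-base case. -/
lemma op_cons_gt (x y : X) (t : List X) (hl : (y :: t).Pairwise (· ≤ ·)) (hxy : ¬ x ≤ y) :
    op b x (Finsupp.single ⟨y :: t, hl⟩ 1) =
      op b y (op b x (Finsupp.single ⟨t, hl.of_cons⟩ 1)) +
      rho b ⁅b x, b y⁆ (Finsupp.single ⟨t, hl.of_cons⟩ 1) := by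
  rw [op_single]
  have : Ax b x ⟨y :: t, hl⟩ = A b (t.length + 2) x ⟨y :: t, hl⟩ := rfl
  rw [this, show t.length + 2 = (t.length + 1) + 1 from rfl,
    A_cons_gt b (t.length + 1) x y t hl hxy]
  congr 1
  · rw [op_single, op_apply]
    have hA : A b (t.length + 1) x ⟨t, hl.of_cons⟩ = Ax b x ⟨t, hl.of_cons⟩ := rfl
    rw [hA]
    apply Finsupp.sum_congr
    intro m' hm'
    congr 1
    by_cases hm'len : m'.val.length ≤ t.length
    · exact A_stab b y m' (t.length + 1) (by omega)
    · have h2 := A_supp b (t.length + 1) x ⟨t, hl.of_cons⟩ m' hm'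
      have hm'len' : m'.val.length = t.length + 1 := by
        simp only [List.length_cons] at h2; omega
      have e1 : m'.val = List.orderedInsert (· ≤ ·) x t :=
        A_top b (t.length + 1) x ⟨t, hl.of_cons⟩ m' hm' hm'len'
      have hy : ∀ a ∈ m'.val, y ≤ a := by
        intro a ha
        rw [e1] at ha
        rcases (List.mem_orderedInsert _).1 ha with rfl | ha
        · exact le_of_not_ge hxy
        · exact (List.pairwise_cons.1 hl).1 a ha
      rw [show t.length + 1 = t.length + 0 + 1 from rfl, A_base b _ y m' hy]
      rw [Ax]
      obtain ⟨n'', hn''⟩ : ∃ n'', m'.val.length + 1 = n'' + 1 := ⟨m'.val.length, rfl⟩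
      rw [hn'', A_base b n'' y m' hy]
  · rw [rho_apply_single]
    rfl

/-- The defect of the commutation relation. -/
noncomputable def E (u w : L) : (M X →₀ K) →ₗ[K] (M X →₀ K) :=
  rho b u ∘ₗ rho b w - rho b w ∘ₗ rho b u - rho b ⁅u, w⁆

lemma E_apply (u w : L) (v : M X →₀ K) :
    E b u w v = rho b u (rho b w v) - rho b w (rho b u v) - rho b ⁅u, w⁆ v := rfl

lemma E_eq_zero_iff (u w : L) (v : M X →₀ K) :
    E b u w v = 0 ↔ rho b u (rho b w v) = rho b w (rho b u v) + rho b ⁅u, w⁆ v := by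
  rw [E_apply, sub_sub, sub_eq_zero]

lemma E_add_left (u u' w : L) : E b (u + u') w = E b u w + E b u' w := by
  refine LinearMap.ext fun v => ?_
  simp only [E_apply, map_add, add_lie, LinearMap.add_apply]
  abel

lemma E_smul_left (c : K) (u w : L) : E b (c • u) w = c • E b u w := by
  refine LinearMap.ext fun v => ?_
  simp only [E_apply, map_smul, smul_lie, LinearMap.smul_apply, smul_sub]

lemma E_zero_left (w : L) : E b 0 w = 0 := by
  refine LinearMap.ext fun v => ?_
  simp [E_apply]

lemma E_add_right (u w w' : L) : E b u (w + w') = E b u w + E b u w' := by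
  refine LinearMap.ext fun v => ?_
  simp only [E_apply, map_add, lie_add, LinearMap.add_apply]
  abel

lemma E_smul_right (c : K) (u w : L) : E b u (c • w) = c • E b u w := by
  refine LinearMap.ext fun v => ?_
  simp only [E_apply, map_smul, lie_smul, LinearMap.smul_apply, smul_sub]

lemma E_zero_right (u : L) : E b u 0 = 0 := by
  refine LinearMap.ext fun v => ?_
  simp [E_apply]

/-- Antisymmetry of the defect. -/
lemma E_skew (u w : L) (v : M X →₀ K) (h : E b w u v = 0) : E b u w v = 0 := by
  have e : E b u w v = - E b w u v := by
    simp only [E_apply]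
    rw [← lie_skew w u, map_neg]
    simp only [LinearMap.neg_apply]
    abel
  rw [e, h, neg_zero]

lemma E_of_support (u w : L) (v : M X →₀ K)
    (h : ∀ m' ∈ v.support, E b u w (Finsupp.single m' 1) = 0) : E b u w v = 0 := by
  conv_lhs => rw [← Finsupp.sum_single v]
  rw [map_finsuppSum, Finsupp.sum]
  apply Finset.sum_eq_zero
  intro m' hm'
  have : Finsupp.single m' (v m') = (v m') • Finsupp.single m' 1 := by
    rw [Finsupp.smul_single' (v m') m' 1, mul_one]
  rw [this, map_smul, h m' hm', smul_zero]

lemma comm_base (x y : X) (hxy : ¬ x ≤ y) (m : M X) (hy : ∀ a ∈ m.val, y ≤ a) :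
    E b (b x) (b y) (Finsupp.single m 1) = 0 := by
  rw [E_eq_zero_iff, rho_basis, rho_basis]
  rw [base_single b y m hy]
  exact op_cons_gt b x y m.val (List.pairwise_cons.2 ⟨hy, m.2⟩) hxy

lemma E_all (v : M X →₀ K) (hbasis : ∀ x y : X, E b (b x) (b y) v = 0) (u w : L) :
    E b u w v = 0 := by
  have hu : ∀ u' ∈ Submodule.span K (Set.range b), E b u' w v = 0 := by
    intro u' hu'
    induction hu' using Submodule.span_induction with
    | mem z hz =>
      obtain ⟨x, rfl⟩ := hz
      have hw : ∀ w' ∈ Submodule.span K (Set.range b), E b (b x) w' v = 0 := by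
        intro w' hw'
        induction hw' using Submodule.span_induction with
        | mem z' hz' => obtain ⟨y, rfl⟩ := hz'; exact hbasis x y
        | zero => rw [E_zero_right]; rfl
        | add w₁ w₂ h₁ h₂ ih₁ ih₂ =>
          rw [E_add_right]; simp only [LinearMap.add_apply, ih₁, ih₂, add_zero]
        | smul c w₁ h₁ ih₁ =>
          rw [E_smul_right]; simp only [LinearMap.smul_apply, ih₁, smul_zero]
      exact hw w (by rw [b.span_eq]; trivial)
    | zero => rw [E_zero_left]; rfl
    | add u₁ u₂ h₁ h₂ ih₁ ih₂ =>
      rw [E_add_left]; simp only [LinearMap.add_apply, ih₁, ih₂, add_zero]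
    | smul c u₁ h₁ ih₁ =>
      rw [E_smul_left]; simp only [LinearMap.smul_apply, ih₁, smul_zero]
  exact hu u (by rw [b.span_eq]; trivial)

lemma E_self (u : L) (v : M X →₀ K) : E b u u v = 0 := by
  simp [E_apply]

lemma mono : ∀ (n : ℕ) (m : M X), m.val.length ≤ n → ∀ u w : L,
    E b u w (Finsupp.single m 1) = 0 := by
  intro n
  induction n with
  | zero =>
    rintro ⟨l, hl⟩ hlen u w
    have hnil : l = [] := List.length_eq_zero_iff.1 (Nat.le_zero.1 hlen)
    subst hnil
    apply E_all
    intro x y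
    rcases lt_trichotomy x y with h | h | h
    · exact E_skew b _ _ _ (comm_base b y x (not_le_of_gt h) _ (by simp))
    · subst h; exact E_self b _ _
    · exact comm_base b x y (not_le_of_gt h) _ (by simp)
  | succ n ih =>
    rintro m hlen u w
    by_cases hsh : m.val.length ≤ n
    · exact ih m hsh u w
    · have hlen' : m.val.length = n + 1 := by omega
      apply E_all
      have hshort : ∀ (v : M X →₀ K), (∀ m' ∈ v.support, m'.val.length ≤ n) →
          ∀ u w : L, E b u w v = 0 := by
        intro v hv u w
        exact E_of_support b u w v fun m' hm' => ih m' (hv m' hm') u w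
      -- main claim for basis pairs with x > y
      have key : ∀ x y : X, ¬ x ≤ y → E b (b x) (b y) (Finsupp.single m 1) = 0 := by
        intro x y hxy
        obtain ⟨l, hl⟩ := m
        match l, hl with
        | z :: t, hl =>
        simp only [List.length_cons] at hlen'
        have htlen : t.length = n := by omega
        by_cases hyz : y ≤ z
        · -- base commutation case
          apply comm_base b x y hxy
          intro a ha
          rcases List.mem_cons.1 ha with rfl | ha
          · exact hyz
          · exact hyz.trans ((List.pairwise_cons.1 hl).1 a ha)
        · -- hard case : z < y < x
          have hzy : z < y := lt_of_not_ge hyz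
          have hzx : z < x := hzy.trans (lt_of_not_ge hxy)
          set zt : M X →₀ K := Finsupp.single ⟨t, hl.of_cons⟩ 1 with hzt
          have hzlb : ∀ a ∈ t, z ≤ a := (List.pairwise_cons.1 hl).1
          have ht : ∀ u w : L, E b u w zt = 0 := by
            intro u w
            apply hshort
            intro m' hm'
            have := Finsupp.support_single_subset hm'
            simp only [Finset.mem_singleton] at this
            subst this
            simpa using htlen.le
          have ht' : ∀ u w : L, rho b u (rho b w zt) = rho b w (rho b u zt)
              + rho b ⁅u, w⁆ zt := fun u w => (E_eq_zero_iff b u w zt).1 (ht u w)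
          -- commutation of (x, z) and (y, z) past one application of an operator
          have hC : ∀ x' y' : X, ¬ x' ≤ z → z ≤ y' →
              E b (b x') (b z) (rho b (b y') zt) = 0 := by
            intro x' y' hx'z hzy'
            apply E_of_support
            intro m' hm'
            rw [rho_basis, op_single] at hm'
            by_cases hms : m'.val.length ≤ n
            · exact ih m' hms (b x') (b z)
            · have h2 := A_supp b (t.length + 1) y' ⟨t, hl.of_cons⟩ m' hm'
              simp only at h2
              have hm'len : m'.val.length = t.length + 1 := by omega
              have e1 : m'.val = List.orderedInsert (· ≤ ·) y' t :=
                A_top b (t.length + 1) y' ⟨t, hl.of_cons⟩ m' hm' hm'len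
              apply comm_base b x' z hx'z m'
              · intro a ha
                rw [e1] at ha
                rcases (List.mem_orderedInsert _).1 ha with rfl | ha
                · exact hzy'
                · exact hzlb a ha
          have hCx := (E_eq_zero_iff b _ _ _).1 (hC x y (not_le_of_gt hzx) hzy.le)
          have hCy := (E_eq_zero_iff b _ _ _).1 (hC y x (not_le_of_gt hzy) hzx.le)
          have hm : rho b (b z) zt = Finsupp.single ⟨z :: t, hl⟩ (1:K) := by
            rw [rho_basis, hzt, base_single b z ⟨t, hl.of_cons⟩ hzlb]
          rw [E_eq_zero_iff, ← hm]
          rw [ht' (b y) (b z), map_add, hCx, ht' (b x) ⁅b y, b z⁆,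
            ht' (b x) (b y), map_add, ht' (b x) (b z), map_add, hCy,
            ht' (b y) ⁅b x, b z⁆, ht' ⁅b x, b y⁆ (b z),
            leibniz_lie (b x) (b y) (b z)]
          simp only [map_add, LinearMap.add_apply]
          abel
      intro x y
      rcases lt_trichotomy x y with h | h | h
      · exact E_skew b _ _ _ (key y x (not_le_of_gt h))
      · subst h; exact E_self b _ _
      · exact key x y (not_le_of_gt h)

lemma E_eq_zero (u w : L) : E b u w = 0 :=
  LinearMap.ext fun v' =>
    E_of_support b u w v' fun m' _ => mono b m'.val.length m' le_rfl u w

/-- The representation of `L`, as a morphism of Lie algebras. -/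
noncomputable def rhoLie : L →ₗ⁅K⁆ Module.End K (M X →₀ K) :=
  { rho b with
    map_lie' := fun {u w} => by
      change rho b ⁅u, w⁆ = ⁅rho b u, rho b w⁆
      refine LinearMap.ext fun v' => ?_
      have h : E b u w v' = 0 := by rw [E_eq_zero]; rfl
      have h' := (E_eq_zero_iff b u w v').1 h
      change _ = (rho b u * rho b w - rho b w * rho b u) v'
      simp only [LinearMap.sub_apply, Module.End.mul_apply]
      rw [h']
      abel }

/-- The induced algebra morphism out of the universal enveloping algebra. -/
noncomputable def phi : UniversalEnvelopingAlgebra K L →ₐ[K] Module.End K (M X →₀ K) :=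
  UniversalEnvelopingAlgebra.lift K (rhoLie b)

def emptyM : M X := ⟨[], List.Pairwise.nil⟩

lemma phi_prod (l : List X) (hl : l.Pairwise (· ≤ ·)) :
    phi b ((l.map fun x => (ι K : L →ₗ⁅K⁆ _) (b x)).prod)
      (Finsupp.single (emptyM : M X) 1) = Finsupp.single ⟨l, hl⟩ 1 := by
  induction l with
  | nil => simp only [List.map_nil, List.prod_nil, map_one, Module.End.one_apply]; rfl
  | cons x t ih =>
    rw [List.map_cons, List.prod_cons, map_mul, Module.End.mul_apply,
      ih ((List.pairwise_cons.1 hl).2)]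
    have h1 : phi b ((ι K : L →ₗ⁅K⁆ _) (b x)) = rho b (b x) :=
      UniversalEnvelopingAlgebra.lift_ι_apply K (rhoLie b) (b x)
    rw [h1, rho_basis, base_single b x ⟨t, (List.pairwise_cons.1 hl).2⟩ (List.pairwise_cons.1 hl).1]

/-- Linear independence of the sorted monomials in `U(L)`. -/
lemma indep (v : M X → UniversalEnvelopingAlgebra K L)
    (hv : ∀ l, v l = (l.val.map fun x => (ι K : L →ₗ⁅K⁆ _) (b x)).prod) :
    LinearIndependent K v := by
  let psi : UniversalEnvelopingAlgebra K L →ₗ[K] (M X →₀ K) :=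
    { toFun := fun a => phi b a (Finsupp.single (emptyM : M X) 1)
      map_add' := fun a c => by simp [map_add]
      map_smul' := fun c a => by simp [map_smul] }
  apply LinearIndependent.of_comp psi
  have he : ⇑psi ∘ v = fun l : M X => Finsupp.single l 1 := by
    funext l
    show phi b (v l) (Finsupp.single (emptyM : M X) 1) = _
    rw [hv l, phi_prod b l.val l.2]
  rw [he, ← Finsupp.coe_basisSingleOne]
  exact (Finsupp.basisSingleOne).linearIndependent

/-- number of inversions in a list -/
def inversions : List X → ℕ
  | [] => 0
  | x :: t => (t.countP fun a => decide (a < x)) + inversions t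

lemma inversions_swap (x y : X) (hxy : ¬ x ≤ y) :
    ∀ (p q : List X), inversions (p ++ y :: x :: q) < inversions (p ++ x :: y :: q) := by
  intro p
  induction p with
  | nil =>
    intro q
    simp only [List.nil_append, inversions, List.countP_cons]
    have h1 : ¬ (x < y) := fun h => hxy h.le
    have h2 : (decide (y < x)) = true := decide_eq_true (lt_of_not_ge hxy)
    have h1' : (decide (x < y)) = false := decide_eq_false h1
    rw [h1', h2]
    simp only [Bool.false_eq_true, if_false, if_true]
    omega
  | cons a p ih =>
    intro q
    simp only [List.cons_append, inversions, List.append_eq]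
    have hperm : (p ++ y :: x :: q).countP (fun c => decide (c < a)) =
        (p ++ x :: y :: q).countP (fun c => decide (c < a)) := by
      apply List.Perm.countP_eq
      exact (List.perm_append_left_iff p).2 (List.Perm.swap x y q)
    rw [hperm]
    have := ih q
    omega

lemma exists_desc : ∀ (l : List X), ¬ l.Pairwise (· ≤ ·) →
    ∃ (p : List X) (x y : X) (q : List X), l = p ++ x :: y :: q ∧ ¬ x ≤ y := by
  intro l
  induction l with
  | nil => intro h; exact absurd List.Pairwise.nil h
  | cons a t ih =>
    intro h
    by_cases hts : t.Pairwise (· ≤ ·)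
    · -- the failure is at the head
      have hbad : ∃ c ∈ t, ¬ a ≤ c := by
        by_contra hall
        push_neg at hall
        exact h (List.pairwise_cons.2 ⟨hall, hts⟩)
      obtain ⟨c, hc, hac⟩ := hbad
      match t, hts with
      | c' :: t', hts =>
        refine ⟨[], a, c', t', rfl, fun hac' => hac ?_⟩
        rcases List.mem_cons.1 hc with rfl | hc
        · exact hac'
        · exact hac'.trans ((List.pairwise_cons.1 hts).1 c hc)
    · obtain ⟨p, x, y, q, rfl, hxy⟩ := ih hts
      exact ⟨a :: p, x, y, q, rfl, hxy⟩

variable (K) in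
/-- monomial products in the universal enveloping algebra -/
noncomputable def pm (l : List X) : UniversalEnvelopingAlgebra K L :=
  (l.map fun x => (ι K : L →ₗ⁅K⁆ _) (b x)).prod

lemma pm_append (l l' : List X) : pm K b (l ++ l') = pm K b l * pm K b l' := by
  rw [pm, pm, pm, List.map_append, List.prod_append]

lemma pm_cons (x : X) (l : List X) :
    pm K b (x :: l) = (ι K : L →ₗ⁅K⁆ _) (b x) * pm K b l := by
  rw [pm, pm, List.map_cons, List.prod_cons]

lemma pm_nil : pm K b [] = 1 := rfl

lemma ι_expand (u : L) :
    (ι K : L →ₗ⁅K⁆ UniversalEnvelopingAlgebra K L) u =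
      (b.repr u).sum fun w c => c • (ι K : L →ₗ⁅K⁆ _) (b w) := by
  conv_lhs => rw [← b.linearCombination_repr u]
  rw [show ⇑(ι K : L →ₗ⁅K⁆ UniversalEnvelopingAlgebra K L) =
      ⇑((ι K : L →ₗ⁅K⁆ UniversalEnvelopingAlgebra K L) : L →ₗ[K] _) from rfl,
    Finsupp.linearCombination_apply, map_finsuppSum]
  exact Finsupp.sum_congr fun w _ => by rw [map_smul]

lemma pm_swap (p q : List X) (x y : X) :
    pm K b (p ++ x :: y :: q) = pm K b (p ++ y :: x :: q) +
      (b.repr ⁅b x, b y⁆).sum fun w c => c • pm K b (p ++ w :: q) := by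
  have key : (ι K : L →ₗ⁅K⁆ UniversalEnvelopingAlgebra K L) (b x) * (ι K) (b y) =
      (ι K) (b y) * (ι K) (b x) + (ι K : L →ₗ⁅K⁆ _) ⁅b x, b y⁆ := by
    have h := LieHom.map_lie (ι K : L →ₗ⁅K⁆ UniversalEnvelopingAlgebra K L) (b x) (b y)
    rw [LieRing.of_associative_ring_bracket] at h
    rw [h]; abel
  have hx : ∀ w : X, pm K b (p ++ w :: q) = pm K b p * ((ι K : L →ₗ⁅K⁆ _) (b w) * pm K b q) := by
    intro w
    rw [pm_append, pm_cons]
  have h2 : pm K b (p ++ x :: y :: q) =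
      pm K b p * ((ι K : L →ₗ⁅K⁆ _) (b x) * ((ι K) (b y) * pm K b q)) := by
    rw [pm_append, pm_cons, pm_cons]
  have h3 : pm K b (p ++ y :: x :: q) =
      pm K b p * ((ι K : L →ₗ⁅K⁆ _) (b y) * ((ι K) (b x) * pm K b q)) := by
    rw [pm_append, pm_cons, pm_cons]
  rw [h2, h3, ← mul_assoc ((ι K : L →ₗ⁅K⁆ _) (b x)), key, ι_expand b ⁅b x, b y⁆]
  rw [add_mul, mul_add, mul_assoc]
  congr 1
  rw [Finsupp.sum, Finsupp.sum, Finset.sum_mul, Finset.mul_sum, Finset.sum_congr rfl]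
  intro w _
  rw [smul_mul_assoc, mul_smul_comm, hx w]

variable (K) in
/-- span of sorted monomials -/
noncomputable def S0 : Submodule K (UniversalEnvelopingAlgebra K L) :=
  Submodule.span K (Set.range fun m : M X => pm K b m.val)

lemma pm_mem_sorted (l : List X) (hl : l.Pairwise (· ≤ ·)) : pm K b l ∈ S0 K b :=
  Submodule.subset_span ⟨⟨l, hl⟩, rfl⟩

/-- Straightening: every monomial lies in the span of the sorted monomials. -/
lemma straight : ∀ (N : ℕ) (l : List X), l.length ≤ N → pm K b l ∈ S0 K b := by
  intro N
  induction N with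
  | zero =>
    intro l hl
    have : l = [] := List.length_eq_zero_iff.1 (Nat.le_zero.1 hl)
    subst this
    exact pm_mem_sorted b [] List.Pairwise.nil
  | succ N ihN =>
    suffices h : ∀ (k : ℕ) (l : List X), l.length ≤ N + 1 → inversions l ≤ k →
        pm K b l ∈ S0 K b from fun l hl => h (inversions l) l hl le_rfl
    intro k
    induction k with
    | zero =>
      intro l hlen hinv
      by_cases hs : l.Pairwise (· ≤ ·)
      · exact pm_mem_sorted b l hs
      · obtain ⟨p, x, y, q, rfl, hxy⟩ := exists_desc _ hs
        have := inversions_swap x y hxy p q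
        omega
    | succ k ihk =>
      intro l hlen hinv
      by_cases hs : l.Pairwise (· ≤ ·)
      · exact pm_mem_sorted b l hs
      · obtain ⟨p, x, y, q, rfl, hxy⟩ := exists_desc _ hs
        rw [pm_swap]
        apply Submodule.add_mem
        · apply ihk
          · have h1 : (p ++ x :: y :: q).length = (p ++ y :: x :: q).length := by
              simp
            omega
          · have := inversions_swap x y hxy p q
            omega
        · apply Submodule.finsuppSum_mem
          intro w _
          apply Submodule.smul_mem
          apply ihN
          have h1 : (p ++ x :: y :: q).length = p.length + q.length + 2 := by
            simp; omega
          have h2 : (p ++ w :: q).length = p.length + q.length + 1 := by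
            simp; omega
          omega

lemma S0_mul_mem {a c : UniversalEnvelopingAlgebra K L}
    (ha : a ∈ S0 K b) (hc : c ∈ S0 K b) : a * c ∈ S0 K b := by
  induction ha using Submodule.span_induction with
  | mem a1 h1 =>
    obtain ⟨m1, rfl⟩ := h1
    induction hc using Submodule.span_induction with
    | mem c1 h2 =>
      obtain ⟨m2, rfl⟩ := h2
      rw [← pm_append]
      exact straight b _ _ le_rfl
    | zero => rw [mul_zero]; exact Submodule.zero_mem _
    | add c1 c2 hc1 hc2 ih1 ih2 => rw [mul_add]; exact Submodule.add_mem _ ih1 ih2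
    | smul r c1 hc1 ih1 => rw [mul_smul_comm]; exact Submodule.smul_mem _ r ih1
  | zero => rw [zero_mul]; exact Submodule.zero_mem _
  | add a1 a2 ha1 ha2 ih1 ih2 => rw [add_mul]; exact Submodule.add_mem _ ih1 ih2
  | smul r a1 ha1 ih1 => rw [smul_mul_assoc]; exact Submodule.smul_mem _ r ih1

lemma S0_top : S0 K b = ⊤ := by
  rw [eq_top_iff]
  rintro a -
  obtain ⟨ta, rfl⟩ : ∃ ta, mkAlgHom K L ta = a := RingCon.mkₐ_surjective (α := K) _ a
  induction ta using TensorAlgebra.induction with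
  | algebraMap r =>
    rw [AlgHom.commutes, Algebra.algebraMap_eq_smul_one]
    exact Submodule.smul_mem _ r (pm_mem_sorted b [] List.Pairwise.nil)
  | ι u =>
    have hu : mkAlgHom K L (TensorAlgebra.ι K u)
        = (ι K : L →ₗ⁅K⁆ _) u := rfl
    rw [hu, ι_expand b]
    apply Submodule.finsuppSum_mem
    intro w _
    apply Submodule.smul_mem
    have : (ι K : L →ₗ⁅K⁆ UniversalEnvelopingAlgebra K L) (b w) = pm K b [w] := by
      rw [pm_cons, pm_nil, mul_one]
    rw [this]
    exact straight b 1 [w] (by simp)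
  | mul a1 a2 h1 h2 => rw [map_mul]; exact S0_mul_mem b h1 h2
  | add a1 a2 h1 h2 => rw [map_add]; exact Submodule.add_mem _ h1 h2

end PBWaux

open PBWaux in
/-- Poincaré–Birkhoff–Witt: if `char K = 0` and `L` is a Lie algebra over `K`
with a totally ordered basis `(X, ≤)`, then the products `x₁ ⋯ xₙ` in `U(L)` over
nondecreasing lists `x₁ ≤ ⋯ ≤ xₙ` of basis elements (the empty list giving `1`) form a
`K`-basis of `U(L)`. -/
theorem stmt5 {K L X : Type*} [Field K] [CharZero K]
    [LieRing L] [LieAlgebra K L] [LinearOrder X] (b : Module.Basis X K L)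
    (v : {l : List X // l.Pairwise (· ≤ ·)} → UniversalEnvelopingAlgebra K L)
    (hv : ∀ l, v l = (l.val.map fun x => (ι K : L →ₗ⁅K⁆ _) (b x)).prod) :
    LinearIndependent K v ∧ Submodule.span K (Set.range v) = ⊤ := by
  constructor
  · exact indep b v hv
  · have hveq : v = fun m : M X => pm K b m.val := funext fun l => hv l
    rw [hveq]
    exact S0_top b
end

section
/- Let B be a connected bialgebra over a field K with coradical filtration (B_n). Then the associated graded coalgebra gr B = ⊕_{n≥0} B_n/B_{n-1} is strictly graded; in particular its space of primitive elements equals the degree-one component B₁/B₀. -/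
open TensorProduct

/-- The image of `S ⊗ T` inside `C ⊗ C`, for submodules `S, T` of `C`. -/
noncomputable def subTensor {K C : Type*} [Field K] [AddCommGroup C] [Module K C]
    (S T : Submodule K C) : Submodule K (C ⊗[K] C) :=
  LinearMap.range (TensorProduct.map S.subtype T.subtype)

/-- A subcoalgebra of a coalgebra `C`: a submodule `S` with `Δ(S) ⊆ S ⊗ S`. -/
def IsSubcoalgebra {K C : Type*} [Field K] [AddCommGroup C] [Module K C] [Coalgebra K C]
    (S : Submodule K C) : Prop :=
  ∀ s ∈ S, Coalgebra.comul (R := K) s ∈ subTensor S S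

/-- A simple subcoalgebra: a nonzero subcoalgebra with no nonzero proper subcoalgebra. -/
def IsSimpleSubcoalgebra {K C : Type*} [Field K] [AddCommGroup C] [Module K C] [Coalgebra K C]
    (S : Submodule K C) : Prop :=
  IsSubcoalgebra S ∧ S ≠ ⊥ ∧
    ∀ T : Submodule K C, T ≤ S → IsSubcoalgebra T → T = ⊥ ∨ T = S

/-- The coradical of a coalgebra: the sum of all its simple subcoalgebras. -/
noncomputable def coradical (K C : Type*) [Field K] [AddCommGroup C] [Module K C]
    [Coalgebra K C] : Submodule K C :=
  ⨆ S ∈ {S : Submodule K C | IsSimpleSubcoalgebra S}, S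

/-- The coradical filtration: `C_0` is the coradical and
`C_n = Δ⁻¹(C ⊗ C_{n-1} + C_0 ⊗ C)`. -/
noncomputable def coradFil (K C : Type*) [Field K] [AddCommGroup C] [Module K C]
    [Coalgebra K C] : ℕ → Submodule K C
  | 0 => coradical K C
  | n + 1 => Submodule.comap (Coalgebra.comul (R := K))
      (subTensor ⊤ (coradFil K C n) ⊔ subTensor (coradical K C) ⊤)

/-- The coradical filtration shifted by one, with `C_{-1} = 0`. -/
noncomputable def coradPred (K C : Type*) [Field K] [AddCommGroup C] [Module K C]
    [Coalgebra K C] : ℕ → Submodule K C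
  | 0 => ⊥
  | n + 1 => coradFil K C n

/-- The subspace `Σ_{i+j=n} (C_{i-1} ⊗ C_j + C_i ⊗ C_{j-1})` of `C ⊗ C`: an element `x` of
`C_n` has primitive class in the degree-`n` part of `gr C` iff
`Δx - x ⊗ 1 - 1 ⊗ x` lies in this subspace. -/
noncomputable def grLower (K C : Type*) [Field K] [AddCommGroup C] [Module K C]
    [Coalgebra K C] (n : ℕ) : Submodule K (TensorProduct K C C) :=
  ⨆ i ∈ Finset.Iic n,
    (subTensor (coradPred K C i) (coradFil K C (n - i)) ⊔
      subTensor (coradFil K C i) (coradPred K C (n - i)))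

section Aux
variable {K C : Type*} [Field K] [AddCommGroup C] [Module K C]

lemma tmul_mem_subTensor {S T : Submodule K C} {s t : C} (hs : s ∈ S) (ht : t ∈ T) :
    s ⊗ₜ[K] t ∈ subTensor S T :=
  ⟨(⟨s, hs⟩ : S) ⊗ₜ (⟨t, ht⟩ : T), rfl⟩

lemma subTensor_mono {S S' T T' : Submodule K C} (h1 : S ≤ S') (h2 : T ≤ T') :
    subTensor S T ≤ subTensor S' T' := by
  rw [subTensor, TensorProduct.range_map_eq_span_tmul]
  refine Submodule.span_le.2 ?_
  rintro _ ⟨m, n, rfl⟩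
  exact tmul_mem_subTensor (h1 m.2) (h2 n.2)

lemma subTensor_bot_left (T : Submodule K C) : subTensor (⊥ : Submodule K C) T = ⊥ := by
  rw [subTensor, TensorProduct.range_map_eq_span_tmul]
  refine le_antisymm (Submodule.span_le.2 ?_) bot_le
  rintro _ ⟨m, n, rfl⟩
  have : (m : C) = 0 := m.2
  simp [this]

lemma subTensor_bot_right (S : Submodule K C) : subTensor S (⊥ : Submodule K C) = ⊥ := by
  rw [subTensor, TensorProduct.range_map_eq_span_tmul]
  refine le_antisymm (Submodule.span_le.2 ?_) bot_le
  rintro _ ⟨m, n, rfl⟩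
  have : (n : C) = 0 := n.2
  simp [this]

lemma mem_subTensor_top_span {u : C ⊗[K] C} {e : C}
    (hu : u ∈ subTensor ⊤ (Submodule.span K {e})) : ∃ a : C, u = a ⊗ₜ[K] e := by
  rw [subTensor, TensorProduct.range_map_eq_span_tmul] at hu
  induction hu using Submodule.span_induction with
  | mem z hz =>
    obtain ⟨m, n, rfl⟩ := hz
    obtain ⟨c, hc⟩ := Submodule.mem_span_singleton.1 n.2
    exact ⟨c • (m : C), by show (m : C) ⊗ₜ[K] (n : C) = _; rw [smul_tmul, hc]⟩
  | zero => exact ⟨0, by simp⟩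
  | add y z _ _ hy hz =>
    obtain ⟨a, rfl⟩ := hy; obtain ⟨b, rfl⟩ := hz
    exact ⟨a + b, by simp [add_tmul]⟩
  | smul c y _ hy =>
    obtain ⟨a, rfl⟩ := hy
    exact ⟨c • a, by simp [smul_tmul']⟩

lemma mem_subTensor_span_top {u : C ⊗[K] C} {e : C}
    (hu : u ∈ subTensor (Submodule.span K {e}) ⊤) : ∃ a : C, u = e ⊗ₜ[K] a := by
  rw [subTensor, TensorProduct.range_map_eq_span_tmul] at hu
  induction hu using Submodule.span_induction with
  | mem z hz =>
    obtain ⟨m, n, rfl⟩ := hz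
    obtain ⟨c, hc⟩ := Submodule.mem_span_singleton.1 m.2
    exact ⟨c • (n : C), by show (m : C) ⊗ₜ[K] (n : C) = _; rw [← smul_tmul, hc]⟩
  | zero => exact ⟨0, by simp⟩
  | add y z _ _ hy hz =>
    obtain ⟨a, rfl⟩ := hy; obtain ⟨b, rfl⟩ := hz
    exact ⟨a + b, by simp [tmul_add]⟩
  | smul c y _ hy =>
    obtain ⟨a, rfl⟩ := hy
    exact ⟨c • a, by simp [tmul_smul]⟩

end Aux

section Main
variable {K B : Type*} [Field K] [Ring B] [Bialgebra K B]

lemma comul_apply_one : Coalgebra.comul (R := K) (1 : B) = (1 : B) ⊗ₜ[K] (1 : B) := by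
  rw [Bialgebra.comul_one, Algebra.TensorProduct.one_def]

lemma one_mem_coradical (hconn : coradical K B = Submodule.span K {(1 : B)}) :
    (1 : B) ∈ coradical K B := by
  rw [hconn]; exact Submodule.mem_span_singleton_self 1

lemma comul_coradical_mem (hconn : coradical K B = Submodule.span K {(1 : B)})
    {s : B} (hs : s ∈ coradical K B) :
    Coalgebra.comul (R := K) s ∈ subTensor (coradical K B) (coradical K B) := by
  rw [hconn] at hs
  obtain ⟨c, rfl⟩ := Submodule.mem_span_singleton.1 hs
  rw [map_smul, comul_apply_one]
  exact Submodule.smul_mem _ _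
    (tmul_mem_subTensor (one_mem_coradical hconn) (one_mem_coradical hconn))

lemma coradical_le_coradFil (hconn : coradical K B = Submodule.span K {(1 : B)}) :
    ∀ n, coradical K B ≤ coradFil K B n
  | 0 => le_rfl
  | n + 1 => by
    intro s hs
    simp only [coradFil, Submodule.mem_comap]
    exact Submodule.mem_sup_right
      (subTensor_mono le_rfl le_top (comul_coradical_mem hconn hs))

lemma coradFil_le_succ (hconn : coradical K B = Submodule.span K {(1 : B)}) :
    ∀ n, coradFil K B n ≤ coradFil K B (n + 1)
  | 0 => coradical_le_coradFil hconn 1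
  | n + 1 => Submodule.comap_mono
      (sup_le_sup (subTensor_mono le_rfl (coradFil_le_succ hconn n)) le_rfl)

lemma coradFil_mono (hconn : coradical K B = Submodule.span K {(1 : B)})
    {i j : ℕ} (h : i ≤ j) : coradFil K B i ≤ coradFil K B j := by
  induction j with
  | zero => simpa [Nat.le_zero.1 h]
  | succ j ih =>
    rcases Nat.lt_or_ge i (j + 1) with h' | h'
    · exact (ih (Nat.lt_succ_iff.1 h')).trans (coradFil_le_succ hconn j)
    · have : i = j + 1 := le_antisymm h h'
      simp [this]

lemma grLower_le (hconn : coradical K B = Submodule.span K {(1 : B)}) (m : ℕ) :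
    grLower K B (m + 2) ≤
      subTensor ⊤ (coradFil K B m) ⊔ subTensor (coradical K B) ⊤ := by
  refine iSup₂_le fun i hi => sup_le ?_ ?_
  · match i with
    | 0 => rw [show coradPred K B 0 = ⊥ from rfl, subTensor_bot_left]; exact bot_le
    | 1 =>
      exact le_sup_right.trans' (subTensor_mono le_rfl le_top)
    | (k + 2) =>
      refine le_sup_left.trans' (subTensor_mono le_top (coradFil_mono hconn ?_))
      omega
  · match i with
    | 0 => exact le_sup_right.trans' (subTensor_mono (coradical_le_coradFil hconn 0) le_top)
    | (i + 1) =>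
      match hm : m + 2 - (i + 1) with
      | 0 => rw [show coradPred K B 0 = ⊥ from rfl, subTensor_bot_right]; exact bot_le
      | (j + 1) =>
        refine le_sup_left.trans' (subTensor_mono le_top ?_)
        show coradFil K B j ≤ _
        exact coradFil_mono hconn (by omega)
end Main

/-- for a connected bialgebra `B`, the graded coalgebra `gr B` associated to
the coradical filtration is strictly graded; in particular its primitives are exactly the
degree-one component `B₁/B₀`.  Concretely: every class of an element of `B₁` is primitive
in `gr B`, and for `n ≥ 2` an element of `B_n` whose class in `B_n/B_{n-1}` is primitive
already lies in `B_{n-1}`. -/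
theorem stmt8 {K B : Type*} [Field K] [Ring B] [Bialgebra K B]
    (hconn : coradical K B = Submodule.span K {(1 : B)}) :
    (∀ x ∈ coradFil K B 1,
      Coalgebra.comul (R := K) x - x ⊗ₜ (1 : B) - (1 : B) ⊗ₜ x ∈ grLower K B 1) ∧
    (∀ n : ℕ, 2 ≤ n → ∀ x ∈ coradFil K B n,
      Coalgebra.comul (R := K) x - x ⊗ₜ (1 : B) - (1 : B) ⊗ₜ x ∈ grLower K B n →
        x ∈ coradFil K B (n - 1)) := by
  constructor
  · intro x hx
    simp only [coradFil, Submodule.mem_comap, hconn] at hx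
    obtain ⟨u, hu, v, hv, huv⟩ := Submodule.mem_sup.1 hx
    obtain ⟨a, rfl⟩ := mem_subTensor_top_span hu
    obtain ⟨b, rfl⟩ := mem_subTensor_span_top hv
    have hΔ : Coalgebra.comul (R := K) x = a ⊗ₜ[K] (1 : B) + (1 : B) ⊗ₜ[K] b := huv.symm
    -- compute b - x
    have h1 := Coalgebra.rTensor_counit_comul (R := K) x
    rw [hΔ, map_add, LinearMap.rTensor_tmul, LinearMap.rTensor_tmul] at h1
    have h1' := congrArg (TensorProduct.lid K B) h1
    simp only [map_add, TensorProduct.lid_tmul, Bialgebra.counit_one, one_smul] at h1'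
    -- h1' : counit a • 1 + b = x
    have hb : b - x ∈ Submodule.span K {(1 : B)} := by
      rw [← h1']
      have : b - (Coalgebra.counit (R := K) a • (1 : B) + b)
          = -(Coalgebra.counit (R := K) a • (1 : B)) := by abel
      rw [this]
      exact neg_mem (Submodule.smul_mem _ _ (Submodule.mem_span_singleton_self 1))
    -- compute a - x
    have h2 := Coalgebra.lTensor_counit_comul (R := K) x
    rw [hΔ, map_add, LinearMap.lTensor_tmul, LinearMap.lTensor_tmul] at h2
    have h2' := congrArg (TensorProduct.rid K B) h2
    simp only [map_add, TensorProduct.rid_tmul, Bialgebra.counit_one, one_smul] at h2'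
    -- h2' : counit 1 • a + counit b • 1 = x  (first smul simplified)
    have ha : a - x ∈ Submodule.span K {(1 : B)} := by
      rw [← h2']
      have : a - (a + Coalgebra.counit (R := K) b • (1 : B))
          = -(Coalgebra.counit (R := K) b • (1 : B)) := by abel
      rw [this]
      exact neg_mem (Submodule.smul_mem _ _ (Submodule.mem_span_singleton_self 1))
    -- conclude
    have key : Coalgebra.comul (R := K) x - x ⊗ₜ[K] (1 : B) - (1 : B) ⊗ₜ[K] x
        = (a - x) ⊗ₜ[K] (1 : B) + (1 : B) ⊗ₜ[K] (b - x) := by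
      rw [hΔ, TensorProduct.sub_tmul, TensorProduct.tmul_sub]; abel
    have hle : subTensor (coradical K B) (coradical K B) ≤ grLower K B 1 := by
      have hmem : (1 : ℕ) ∈ Finset.Iic 1 := by simp
      refine le_trans ?_ (le_iSup₂ (f := fun i (_ : i ∈ Finset.Iic 1) =>
        subTensor (coradPred K B i) (coradFil K B (1 - i)) ⊔
          subTensor (coradFil K B i) (coradPred K B (1 - i))) 1 hmem)
      exact le_sup_left
    rw [key]
    refine hle (add_mem (tmul_mem_subTensor ?_ (one_mem_coradical hconn))
      (tmul_mem_subTensor (one_mem_coradical hconn) ?_))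
    · rw [hconn]; exact ha
    · rw [hconn]; exact hb
  · intro n hn x hx hp
    obtain ⟨m, rfl⟩ : ∃ m, n = m + 2 := ⟨n - 2, by omega⟩
    show x ∈ coradFil K B (m + 1)
    simp only [coradFil, Submodule.mem_comap]
    have h1 : Coalgebra.comul (R := K) x
        = (Coalgebra.comul (R := K) x - x ⊗ₜ[K] (1 : B) - (1 : B) ⊗ₜ[K] x)
          + x ⊗ₜ[K] (1 : B) + (1 : B) ⊗ₜ[K] x := by abel
    rw [h1]
    refine add_mem (add_mem (grLower_le hconn m hp) ?_) ?_
    · exact Submodule.mem_sup_left (tmul_mem_subTensor Submodule.mem_top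
        (coradical_le_coradFil hconn m (one_mem_coradical hconn)))
    · exact Submodule.mem_sup_right (tmul_mem_subTensor (one_mem_coradical hconn)
        Submodule.mem_top)
end

section
/- Let K have prime characteristic p and let V be a K-vector space with totally ordered basis (X, ≤), regarded as a restricted Lie algebra with trivial bracket and trivial p-operation. In the restricted symmetric algebra 𝔰(V) = T(V)/(xy − yx, x^p : x, y ∈ V), the images of the monomials x₁^{t₁} ⋯ xₙ^{tₙ} with x₁ < x₂ < ⋯ < xₙ in X and 1 ≤ tᵢ ≤ p−1, together with 1, form a K-basis of 𝔰(V). -/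
/-- The defining relations of the restricted symmetric algebra
`𝔰(V) = T(V)/(xy - yx, x^p)`. -/
inductive RestrictedSymRel (K V : Type*) [Field K] [AddCommGroup V] [Module K V] (p : ℕ) :
    TensorAlgebra K V → TensorAlgebra K V → Prop
  | comm (x y : V) :
      RestrictedSymRel K V p (TensorAlgebra.ι K x * TensorAlgebra.ι K y)
        (TensorAlgebra.ι K y * TensorAlgebra.ι K x)
  | pow (x : V) : RestrictedSymRel K V p (TensorAlgebra.ι K x ^ p) 0

namespace Stmt12Aux

variable {K V : Type*} [Field K] [AddCommGroup V] [Module K V] {p : ℕ}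

lemma comm_key (x : V) (a : RingQuot (RestrictedSymRel K V p)) :
    RingQuot.mkAlgHom K (RestrictedSymRel K V p) (TensorAlgebra.ι K x) * a
      = a * RingQuot.mkAlgHom K (RestrictedSymRel K V p) (TensorAlgebra.ι K x) := by
  obtain ⟨t, rfl⟩ := RingQuot.mkAlgHom_surjective K (RestrictedSymRel K V p) a
  induction t using TensorAlgebra.induction with
  | algebraMap r => rw [AlgHom.commutes, Algebra.commutes]
  | ι y =>
      have := RingQuot.mkAlgHom_rel K (RestrictedSymRel.comm (K := K) (V := V) (p := p) x y)
      rw [map_mul, map_mul] at this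
      exact this
  | mul a b ha hb => rw [map_mul, ← mul_assoc, ha, mul_assoc, hb, mul_assoc]
  | add a b ha hb => rw [map_add, mul_add, add_mul, ha, hb]

lemma mul_comm_all (a b : RingQuot (RestrictedSymRel K V p)) : a * b = b * a := by
  obtain ⟨t, rfl⟩ := RingQuot.mkAlgHom_surjective K (RestrictedSymRel K V p) a
  induction t using TensorAlgebra.induction with
  | algebraMap r => rw [AlgHom.commutes, Algebra.commutes]
  | ι y => exact comm_key y b
  | mul a c ha hc => rw [map_mul, mul_assoc, hc, ← mul_assoc, ha, mul_assoc]
  | add a c ha hc => rw [map_add, add_mul, mul_add, ha, hc]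

@[reducible]
noncomputable def instCommRing : CommRing (RingQuot (RestrictedSymRel K V p)) :=
  { (inferInstance : Ring (RingQuot (RestrictedSymRel K V p))) with
    mul_comm := mul_comm_all }

end Stmt12Aux

/-- in characteristic `p`, the images in `𝔰(V) = T(V)/(xy - yx, x^p)` of the
monomials `x₁^{t₁} ⋯ xₙ^{tₙ}` with `x₁ < ⋯ < xₙ` basis elements and `1 ≤ tᵢ ≤ p - 1`
(together with `1`, corresponding to the empty monomial) form a `K`-basis.  Such monomials
are indexed by finitely supported functions `t : X →₀ ℕ` with all values `< p`. -/
theorem stmt12 {K V X : Type*} [Field K] [AddCommGroup V] [Module K V]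
    (p : ℕ) [Fact p.Prime] [CharP K p] [LinearOrder X] (b : Module.Basis X K V)
    (v : {t : X →₀ ℕ // ∀ x, t x < p} → RingQuot (RestrictedSymRel K V p))
    (hv : ∀ t, v t = ((t.val.support.sort (· ≤ ·)).map fun x =>
      RingQuot.mkAlgHom K (RestrictedSymRel K V p) (TensorAlgebra.ι K (b x)) ^ t.val x).prod) :
    LinearIndependent K v ∧ Submodule.span K (Set.range v) = ⊤ := by
  letI : CommRing (RingQuot (RestrictedSymRel K V p)) := Stmt12Aux.instCommRing
  set ξ : X → RingQuot (RestrictedSymRel K V p) := fun x =>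
    RingQuot.mkAlgHom K (RestrictedSymRel K V p) (TensorAlgebra.ι K (b x)) with hξdef
  have hvprod : ∀ t, v t = ∏ x ∈ t.1.support, ξ x ^ t.1 x := by
    intro t
    rw [hv, Finset.prod_eq_multiset_prod, ← Finset.sort_eq t.1.support (· ≤ ·),
      Multiset.map_coe, Multiset.prod_coe]
  have hξpow : ∀ x : X, ξ x ^ p = 0 := by
    intro x
    have := RingQuot.mkAlgHom_rel K (RestrictedSymRel.pow (K := K) (V := V) (p := p) (b x))
    rw [map_pow, map_zero] at this
    exact this
  -- the target algebra: MvPolynomial X K modulo the p-th powers of the variables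
  set I : Ideal (MvPolynomial X K) :=
    Ideal.span (Set.range fun x : X => (MvPolynomial.X x : MvPolynomial X K) ^ p) with hIdef
  set μ : MvPolynomial X K →ₐ[K] MvPolynomial X K ⧸ I := Ideal.Quotient.mkₐ K I with hμdef
  set f : V →ₗ[K] MvPolynomial X K ⧸ I :=
    μ.toLinearMap ∘ₗ (Finsupp.linearCombination K MvPolynomial.X) ∘ₗ
      (b.repr : V →ₗ[K] X →₀ K) with hfdef
  have hf : ∀ x : X, f (b x) = μ (MvPolynomial.X x) := by
    intro x
    simp [hfdef, Finsupp.linearCombination_single]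
  have hfpow : ∀ x : V, f x ^ p = 0 := by
    intro x
    have hq : (Finsupp.linearCombination K MvPolynomial.X (b.repr x)) ^ p ∈ I := by
      rw [Finsupp.linearCombination_apply, Finsupp.sum, sum_pow_char]
      refine Ideal.sum_mem I fun i _ => ?_
      rw [smul_pow, Algebra.smul_def]
      exact Ideal.mul_mem_left _ _ (Ideal.subset_span ⟨i, rfl⟩)
    have : f x = μ (Finsupp.linearCombination K MvPolynomial.X (b.repr x)) := rfl
    rw [this, ← map_pow, hμdef, Ideal.Quotient.mkₐ_eq_mk]
    exact Ideal.Quotient.eq_zero_iff_mem.mpr hq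
  set φ0 : TensorAlgebra K V →ₐ[K] MvPolynomial X K ⧸ I := TensorAlgebra.lift K f with hφ0def
  have hrel : ∀ ⦃a c : TensorAlgebra K V⦄, RestrictedSymRel K V p a c → φ0 a = φ0 c := by
    intro a c h
    induction h with
    | comm x y =>
        rw [map_mul, map_mul, hφ0def, TensorAlgebra.lift_ι_apply, TensorAlgebra.lift_ι_apply,
          mul_comm]
    | pow x =>
        rw [map_pow, map_zero, hφ0def, TensorAlgebra.lift_ι_apply, hfpow]
  set φ : RingQuot (RestrictedSymRel K V p) →ₐ[K] MvPolynomial X K ⧸ I :=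
    RingQuot.liftAlgHom K ⟨φ0, hrel⟩ with hφdef
  have hφξ : ∀ x : X, φ (ξ x) = μ (MvPolynomial.X x) := by
    intro x
    rw [hξdef]
    simp only [hφdef]
    rw [RingQuot.liftAlgHom_mkAlgHom_apply]
    rw [hφ0def, TensorAlgebra.lift_ι_apply, hf]
  have hφv : ∀ t, φ (v t) = μ (MvPolynomial.monomial t.1 (1 : K)) := by
    intro t
    rw [hvprod, map_prod, ← MvPolynomial.prod_X_pow_eq_monomial, map_prod]
    exact Finset.prod_congr rfl fun x _ => by rw [map_pow, map_pow, hφξ]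
  -- linear independence
  have hg : LinearIndependent K
      (fun t : {t : X →₀ ℕ // ∀ x, t x < p} => μ (MvPolynomial.monomial t.1 (1 : K))) := by
    rw [linearIndependent_iff']
    intro s c hsum j hj
    by_contra hc
    have hmem : (∑ i ∈ s, MvPolynomial.monomial i.1 (c i)) ∈ I := by
      rw [← Ideal.Quotient.eq_zero_iff_mem]
      show μ (∑ i ∈ s, MvPolynomial.monomial i.1 (c i)) = 0
      have : μ (∑ i ∈ s, MvPolynomial.monomial i.1 (c i))
          = ∑ i ∈ s, c i • μ (MvPolynomial.monomial i.1 (1 : K)) := by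
        rw [map_sum]
        refine Finset.sum_congr rfl fun i _ => ?_
        rw [← map_smul μ, MvPolynomial.smul_monomial, smul_eq_mul, mul_one]
      rw [this, hsum]
    have hI' : I = Ideal.span ((fun s => MvPolynomial.monomial s (1 : K)) ''
        Set.range fun x : X => Finsupp.single x p) := by
      rw [hIdef, ← Set.range_comp]
      congr 1
      ext q
      constructor
      · rintro ⟨x, rfl⟩; exact ⟨x, (MvPolynomial.X_pow_eq_monomial).symm⟩
      · rintro ⟨x, rfl⟩; exact ⟨x, MvPolynomial.X_pow_eq_monomial⟩
    rw [hI', MvPolynomial.mem_ideal_span_monomial_image] at hmem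
    have hsupp : j.1 ∈ (∑ i ∈ s, MvPolynomial.monomial i.1 (c i)).support := by
      rw [MvPolynomial.mem_support_iff, MvPolynomial.coeff_sum]
      rw [Finset.sum_eq_single j]
      · rw [MvPolynomial.coeff_monomial, if_pos rfl]; exact hc
      · intro i _ hij
        rw [MvPolynomial.coeff_monomial, if_neg (fun h => hij (Subtype.ext h))]
      · intro h; exact absurd hj h
    obtain ⟨m, ⟨x, rfl⟩, hle⟩ := hmem _ hsupp
    exact absurd (Finsupp.single_le_iff.mp hle) (not_le.mpr (j.2 x))
  have hLI : LinearIndependent K v := by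
    refine LinearIndependent.of_comp φ.toLinearMap ?_
    have : (φ.toLinearMap ∘ v) =
        fun t : {t : X →₀ ℕ // ∀ x, t x < p} => μ (MvPolynomial.monomial t.1 (1 : K)) :=
      funext fun t => hφv t
    rw [this]
    exact hg
  refine ⟨hLI, ?_⟩
  -- spanning
  set ψ : MvPolynomial X K →ₐ[K] RingQuot (RestrictedSymRel K V p) :=
    MvPolynomial.aeval ξ with hψdef
  have hψX : ∀ x : X, ψ (MvPolynomial.X x) = ξ x := fun x => MvPolynomial.aeval_X ξ x
  have hψsurj : Function.Surjective ψ := by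
    intro a
    obtain ⟨t, rfl⟩ := RingQuot.mkAlgHom_surjective K (RestrictedSymRel K V p) a
    suffices h : RingQuot.mkAlgHom K (RestrictedSymRel K V p) t ∈ ψ.range by
      obtain ⟨q, hq⟩ := h; exact ⟨q, hq⟩
    induction t using TensorAlgebra.induction with
    | algebraMap r => rw [AlgHom.commutes]; exact Subalgebra.algebraMap_mem _ r
    | ι x =>
        set L : V →ₗ[K] RingQuot (RestrictedSymRel K V p) :=
          (RingQuot.mkAlgHom K (RestrictedSymRel K V p)).toLinearMap ∘ₗ
            (TensorAlgebra.ι K : V →ₗ[K] TensorAlgebra K V) with hLdef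
        have hx : RingQuot.mkAlgHom K (RestrictedSymRel K V p) (TensorAlgebra.ι K x)
            = (b.repr x).sum fun i c => c • ξ i := by
          have h1 : RingQuot.mkAlgHom K (RestrictedSymRel K V p) (TensorAlgebra.ι K x)
              = L x := rfl
          rw [h1]
          conv_lhs => rw [← b.linearCombination_repr x]
          rw [Finsupp.linearCombination_apply, map_finsuppSum]
          exact Finsupp.sum_congr fun i _ => map_smul L _ _
        rw [hx, Finsupp.sum]
        exact sum_mem fun i _ =>
          Subalgebra.smul_mem _ ((AlgHom.mem_range _).mpr ⟨MvPolynomial.X i, hψX i⟩) _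
    | mul a c ha hc => rw [map_mul]; exact mul_mem ha hc
    | add a c ha hc => rw [map_add]; exact add_mem ha hc
  have hmono : ∀ d : X →₀ ℕ,
      ψ (MvPolynomial.monomial d (1 : K)) ∈ Submodule.span K (Set.range v) := by
    intro d
    by_cases hd : ∀ x, d x < p
    · have : ψ (MvPolynomial.monomial d (1 : K)) = v ⟨d, hd⟩ := by
        rw [hvprod, ← MvPolynomial.prod_X_pow_eq_monomial, map_prod]
        exact Finset.prod_congr rfl fun x _ => by rw [map_pow, hψX]
      rw [this]
      exact Submodule.subset_span ⟨_, rfl⟩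
    · push_neg at hd
      obtain ⟨x, hx⟩ := hd
      have hppos : 0 < p := (Fact.out : p.Prime).pos
      have hxmem : x ∈ d.support := by
        rw [Finsupp.mem_support_iff]; omega
      have hξ0 : ξ x ^ d x = 0 := by
        have : ξ x ^ d x = ξ x ^ p * ξ x ^ (d x - p) := by
          rw [← pow_add]; congr 1; omega
        rw [this, hξpow, zero_mul]
      have : ψ (MvPolynomial.monomial d (1 : K)) = 0 := by
        rw [← MvPolynomial.prod_X_pow_eq_monomial, map_prod]
        have hcast : ∀ y ∈ d.support, ψ (MvPolynomial.X y ^ d y) = ξ y ^ d y :=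
          fun y _ => by rw [map_pow, hψX]
        rw [Finset.prod_congr rfl hcast, ← Finset.mul_prod_erase _ _ hxmem, hξ0, zero_mul]
      rw [this]
      exact Submodule.zero_mem _
  rw [eq_top_iff]
  rintro a -
  obtain ⟨q, rfl⟩ := hψsurj a
  rw [show q = ∑ d ∈ q.support, MvPolynomial.monomial d (MvPolynomial.coeff d q) from
    q.as_sum]
  rw [map_sum]
  refine Submodule.sum_mem _ fun d _ => ?_
  have : MvPolynomial.monomial d (MvPolynomial.coeff d q)
      = MvPolynomial.coeff d q • MvPolynomial.monomial d (1 : K) := by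
    rw [MvPolynomial.smul_monomial, smul_eq_mul, mul_one]
  rw [this, map_smul]
  exact Submodule.smul_mem _ _ (hmono d)
end
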